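/- arXiv:1306.3355 — 3 statements merged into one kernel-verified Lean document; each statement's English description precedes it below -/
import Mathlib

section
/- For n ≥ 2, the total number of occurrences of the vincular pattern 23-1 in Flatten(π) summed over all permutations π of [n] equals the total number of occurrences of 32-1 in Flatten(π) summed over all permutations π of [n]. -/
open scoped Classical

noncomputable def cycList {n : ℕ} (σ : Equiv.Perm (Fin n)) (x : Fin n) : List (Fin n) :=
  (List.range (Function.minimalPeriod σ x)).map (fun k => (⇑σ)^[k] x)

/-- The flattened form of a permutation: cycles in standard cycle form
(ordered by smallest elements, smallest first in each cycle), parentheses erased,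
with values in `{1,…,n}`. -/
noncomputable def flattenPerm {n : ℕ} (σ : Equiv.Perm (Fin n)) : List ℕ :=
  (((List.finRange n).filter (fun x => decide (∀ k < n, x ≤ (⇑σ)^[k] x))).flatMap
    (cycList σ)).map (fun x => (x : ℕ) + 1)

/-- Number of occurrences of the vincular pattern determined by `P` in `w`:
pairs of positions `i < j` (0-indexed, `i ≥ 1`) with `P w_{i-1} w_i w_j`. -/
noncomputable def vinOcc (P : ℕ → ℕ → ℕ → Prop) (w : List ℕ) : ℕ :=
  ((Finset.range w.length ×ˢ Finset.range w.length).filter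
    (fun p => 0 < p.1 ∧ p.1 < p.2 ∧
      P (w.getD (p.1 - 1) 0) (w.getD p.1 0) (w.getD p.2 0))).card

open Equiv Function
open Equiv Function

variable {n : ℕ}

def inOrb (σ : Equiv.Perm (Fin n)) (x y : Fin n) : Prop := ∃ k, (⇑σ)^[k] x = y

variable (σ : Equiv.Perm (Fin n))

lemma perm_periodicPt (x : Fin n) : x ∈ periodicPts ⇑σ := by
  refine mk_mem_periodicPts (orderOf_pos σ) ?_
  show (⇑σ)^[orderOf σ] x = x
  rw [Equiv.Perm.iterate_eq_pow, pow_orderOf_eq_one]; rfl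

lemma per_pos (x : Fin n) : 0 < minimalPeriod ⇑σ x :=
  minimalPeriod_pos_of_mem_periodicPts (perm_periodicPt σ x)

lemma per_le (x : Fin n) : minimalPeriod ⇑σ x ≤ n := by
  have : (Finset.range (minimalPeriod ⇑σ x)).card ≤ (Finset.univ : Finset (Fin n)).card := by
    apply Finset.card_le_card_of_injOn (fun k => (⇑σ)^[k] x) (fun _ _ => Finset.mem_univ _)
    intro k hk l hl hkl
    exact iterate_injOn_Iio_minimalPeriod (by simpa using hk) (by simpa using hl) hkl
  simpa using this

lemma inOrb_refl (x : Fin n) : inOrb σ x x := ⟨0, rfl⟩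

lemma inOrb_trans {x y z : Fin n} (h1 : inOrb σ x y) (h2 : inOrb σ y z) : inOrb σ x z := by
  obtain ⟨k, rfl⟩ := h1; obtain ⟨l, rfl⟩ := h2
  exact ⟨l + k, (iterate_add_apply _ _ _ _)⟩

lemma inOrb_exists_lt (x y : Fin n) (h : inOrb σ x y) :
    ∃ k < minimalPeriod ⇑σ x, (⇑σ)^[k] x = y := by
  obtain ⟨k, rfl⟩ := h
  exact ⟨k % minimalPeriod ⇑σ x, Nat.mod_lt _ (per_pos σ x), iterate_mod_minimalPeriod_eq⟩

lemma inOrb_symm {x y : Fin n} (h : inOrb σ x y) : inOrb σ y x := by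
  obtain ⟨k, hk, rfl⟩ := inOrb_exists_lt σ x y h
  refine ⟨minimalPeriod ⇑σ x - k, ?_⟩
  rw [← iterate_add_apply, Nat.sub_add_cancel hk.le, iterate_minimalPeriod]

lemma inOrb_apply (x : Fin n) : inOrb σ x (σ x) := ⟨1, rfl⟩

lemma mem_cycList {x y : Fin n} : y ∈ cycList σ x ↔ inOrb σ x y := by
  constructor
  · intro h
    simp only [cycList, List.mem_map, List.mem_range] at h
    obtain ⟨k, _, rfl⟩ := h; exact ⟨k, rfl⟩
  · intro h
    obtain ⟨k, hk, rfl⟩ := inOrb_exists_lt σ x y h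
    simp only [cycList, List.mem_map, List.mem_range]
    exact ⟨k, hk, rfl⟩

lemma cycList_nodup (x : Fin n) : (cycList σ x).Nodup := by
  refine List.Nodup.map_on ?_ List.nodup_range
  intro k hk l hl hkl
  exact iterate_injOn_Iio_minimalPeriod (by simpa using hk) (by simpa using hl) hkl

lemma cycList_length (x : Fin n) : (cycList σ x).length = minimalPeriod ⇑σ x := by
  simp [cycList]

lemma cycList_getElem (x : Fin n) (k : ℕ) (hk : k < (cycList σ x).length) :
    (cycList σ x)[k] = (⇑σ)^[k] x := by
  simp [cycList]

def Cmin (σ : Equiv.Perm (Fin n)) (x : Fin n) : Prop := ∀ k < n, x ≤ (⇑σ)^[k] x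

lemma cmin_iff {x : Fin n} : Cmin σ x ↔ ∀ y, inOrb σ x y → x ≤ y := by
  constructor
  · intro h y hy
    obtain ⟨k, hk, rfl⟩ := inOrb_exists_lt σ x y hy
    exact h k (lt_of_lt_of_le hk (per_le σ x))
  · intro h k _
    exact h _ ⟨k, rfl⟩

noncomputable def mins (σ : Equiv.Perm (Fin n)) : List (Fin n) :=
  (List.finRange n).filter (fun x => decide (∀ k < n, x ≤ (⇑σ)^[k] x))

lemma mem_mins {x : Fin n} : x ∈ mins σ ↔ Cmin σ x := by
  simp [mins, Cmin, List.mem_filter]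

lemma mins_sorted : (mins σ).Pairwise (· < ·) := by
  exact List.Pairwise.filter _ (List.pairwise_lt_finRange n)

noncomputable def Wl (σ : Equiv.Perm (Fin n)) : List (Fin n) := (mins σ).flatMap (cycList σ)

lemma list_coe_map (l : List (Fin n)) :
    (List.map (fun x => x + 1) (l.flatMap fun a => [(a : ℕ)])) = l.map (fun x => x.val + 1) := by
  induction l with
  | nil => rfl
  | cons x l ih => simp_all

lemma flattenPerm_eq : flattenPerm σ = (Wl σ).map (fun x => x.val + 1) := by
  unfold flattenPerm Wl mins
  induction (List.filter _ (List.finRange n)).flatMap (cycList σ) <;> simp_all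

lemma mem_flat_orbit {l : List (Fin n)} {y : Fin n} (h : y ∈ l.flatMap (cycList σ)) :
    ∃ x ∈ l, inOrb σ x y := by
  obtain ⟨x, hx, hy⟩ := List.mem_flatMap.1 h
  exact ⟨x, hx, (mem_cycList σ).1 hy⟩

lemma Wl_nodup : (Wl σ).Nodup := by
  rw [Wl, List.nodup_flatMap]
  refine ⟨fun x _ => cycList_nodup σ x, ?_⟩
  refine (mins_sorted σ).imp_of_mem ?_
  intro x x' hx hx' hlt
  intro t ht ht'
  have h1 : inOrb σ x t := (mem_cycList σ).1 ht
  have h2 : inOrb σ x' t := (mem_cycList σ).1 ht'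
  have hxx' : inOrb σ x x' := inOrb_trans σ h1 (inOrb_symm σ h2)
  have c1 := (cmin_iff σ).1 ((mem_mins σ).1 hx) x' hxx'
  have c2 := (cmin_iff σ).1 ((mem_mins σ).1 hx') x (inOrb_symm σ hxx')
  exact absurd (le_antisymm c1 c2) (ne_of_lt hlt)

lemma Wl_mem (y : Fin n) : y ∈ Wl σ := by
  classical
  have hne : (Finset.univ.filter (fun z => inOrb σ y z)).Nonempty :=
    ⟨y, by simp [inOrb_refl]⟩
  set m := (Finset.univ.filter (fun z => inOrb σ y z)).min' hne with hm
  have hmo : inOrb σ y m := by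
    have := (Finset.univ.filter (fun z => inOrb σ y z)).min'_mem hne
    simpa using this
  have hcm : Cmin σ m := by
    rw [cmin_iff]
    intro z hz
    refine Finset.min'_le _ _ ?_
    simp only [Finset.mem_filter, Finset.mem_univ, true_and]
    exact inOrb_trans σ hmo hz
  rw [Wl, List.mem_flatMap]
  exact ⟨m, (mem_mins σ).2 hcm, (mem_cycList σ).2 (inOrb_symm σ hmo)⟩

lemma Wl_length : (Wl σ).length = n := by
  classical
  have h1 : (Wl σ).toFinset = Finset.univ := by
    ext y; simp [Wl_mem σ y]
  have h2 := List.toFinset_card_of_nodup (Wl_nodup σ)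
  rw [h1] at h2
  simp at h2
  omega

lemma flat_head {l : List (Fin n)} (hC : ∀ x ∈ l, Cmin σ x)
    (h0 : 0 < (l.flatMap (cycList σ)).length) : Cmin σ ((l.flatMap (cycList σ))[0]) := by
  induction l with
  | nil => simp at h0
  | cons x l ih =>
    have hlen : 0 < (cycList σ x).length := by rw [cycList_length]; exact per_pos σ x
    have : ((x :: l).flatMap (cycList σ))[0] = x := by
      simp only [List.flatMap_cons]; rw [List.getElem_append_left hlen, cycList_getElem]
      simp
    rw [this]
    exact hC x (by simp)

lemma flat_succ {l : List (Fin n)} (hC : ∀ x ∈ l, Cmin σ x) :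
    ∀ p (hp : p + 1 < (l.flatMap (cycList σ)).length),
      ¬ Cmin σ ((l.flatMap (cycList σ))[p+1]) →
      (l.flatMap (cycList σ))[p+1] = σ ((l.flatMap (cycList σ))[p]'(by omega)) := by
  induction l with
  | nil => intro p hp; simp at hp
  | cons x l ih =>
    intro p hp hnc
    simp only [List.flatMap_cons] at hp hnc ⊢
    set L := (cycList σ x).length with hL
    by_cases h1 : p + 1 < L
    · rw [List.getElem_append_left h1, List.getElem_append_left (by omega), cycList_getElem,
        cycList_getElem, iterate_succ_apply']
    · by_cases h2 : p + 1 = L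
      · exfalso
        have hrest : 0 < (l.flatMap (cycList σ)).length := by
          rw [List.length_append] at hp; omega
        have : (cycList σ x ++ l.flatMap (cycList σ))[p+1] = (l.flatMap (cycList σ))[0] := by
          rw [List.getElem_append_right (by omega)]
          congr 1; omega
        rw [this] at hnc
        exact hnc (flat_head σ (fun y hy => hC y (by simp [hy])) hrest)
      · have h3 : L ≤ p := by omega
        have hp' : (p - L) + 1 < (l.flatMap (cycList σ)).length := by
          rw [List.length_append] at hp; omega
        have e1 : (cycList σ x ++ l.flatMap (cycList σ))[p+1] =
            (l.flatMap (cycList σ))[(p-L)+1] := by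
          rw [List.getElem_append_right (by omega)]; congr 1; omega
        have e2 : (cycList σ x ++ l.flatMap (cycList σ))[p]'(by omega) =
            (l.flatMap (cycList σ))[p-L] := by
          rw [List.getElem_append_right (by omega)]
        rw [e1, e2]
        rw [e1] at hnc
        exact ih (fun y hy => hC y (by simp [hy])) (p - L) hp' hnc

lemma flat_rtl {l : List (Fin n)} (hC : ∀ x ∈ l, Cmin σ x) (hS : l.Pairwise (· < ·)) :
    ∀ p q (hpq : p < q) (hq : q < (l.flatMap (cycList σ)).length),
      Cmin σ ((l.flatMap (cycList σ))[p]'(by omega)) →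
      (l.flatMap (cycList σ))[p]'(by omega) < (l.flatMap (cycList σ))[q] := by
  induction l with
  | nil => intro p q hpq hq; simp at hq
  | cons x l ih =>
    intro p q hpq hq hc
    simp only [List.flatMap_cons] at hq hc ⊢
    set L := (cycList σ x).length with hL
    have hLper : L = minimalPeriod ⇑σ x := cycList_length σ x
    by_cases h1 : p < L
    · -- value at p is in cycList x and is Cmin, hence equals x and p = 0
      have hvp : (cycList σ x ++ l.flatMap (cycList σ))[p]'(by omega) = (⇑σ)^[p] x := by
        rw [List.getElem_append_left h1, cycList_getElem]
      have hin : inOrb σ x ((⇑σ)^[p] x) := ⟨p, rfl⟩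
      rw [hvp] at hc ⊢
      have hx : Cmin σ x := hC x (by simp)
      have he : (⇑σ)^[p] x = x := le_antisymm
        ((cmin_iff σ).1 hc x (inOrb_symm σ hin)) ((cmin_iff σ).1 hx _ hin)
      have hp0 : p = 0 := by
        have := iterate_injOn_Iio_minimalPeriod (f := ⇑σ) (x := x)
          (by simp; omega : p ∈ Set.Iio (minimalPeriod ⇑σ x))
          (by simp [per_pos σ x] : 0 ∈ Set.Iio (minimalPeriod ⇑σ x))
          (by simpa using he)
        exact this
      rw [he]
      by_cases h2 : q < L
      · rw [List.getElem_append_left h2, cycList_getElem]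
        have hle := (cmin_iff σ).1 hx _ (⟨q, rfl⟩ : inOrb σ x ((⇑σ)^[q] x))
        refine lt_of_le_of_ne hle ?_
        intro hcon
        have := iterate_injOn_Iio_minimalPeriod (f := ⇑σ) (x := x)
          (by simp [per_pos σ x] : 0 ∈ Set.Iio (minimalPeriod ⇑σ x))
          (by simp; omega : q ∈ Set.Iio (minimalPeriod ⇑σ x))
          (by simpa using hcon)
        omega
      · have hql : q - L < (l.flatMap (cycList σ)).length := by
          rw [List.length_append] at hq; omega
        rw [List.getElem_append_right (by omega)]
        have hmem : (l.flatMap (cycList σ))[q - L]'hql ∈ l.flatMap (cycList σ) :=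
          List.getElem_mem _
        obtain ⟨x', hx', horb⟩ := mem_flat_orbit σ hmem
        have hxx' : x < x' := by
          have := List.pairwise_cons.1 hS
          exact this.1 x' hx'
        have hx'le := (cmin_iff σ).1 (hC x' (by simp [hx'])) _ horb
        exact lt_of_lt_of_le hxx' hx'le
    · have h2 : L ≤ p := by omega
      have e1 : (cycList σ x ++ l.flatMap (cycList σ))[p]'(by omega) =
          (l.flatMap (cycList σ))[p-L]'(by rw [List.length_append] at hq; omega) := by
        rw [List.getElem_append_right (by omega)]
      have e2 : (cycList σ x ++ l.flatMap (cycList σ))[q] =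
          (l.flatMap (cycList σ))[q-L]'(by rw [List.length_append] at hq; omega) := by
        rw [List.getElem_append_right (by omega)]
      rw [e1, e2]
      rw [e1] at hc
      exact ih (fun y hy => hC y (by simp [hy])) (List.Pairwise.of_cons hS)
        (p - L) (q - L) (by omega) (by rw [List.length_append] at hq; omega) hc

section Conj
variable {σ} {a b : Fin n} (hab : inOrb σ a b) (hCa : ¬ Cmin σ a) (hCb : ¬ Cmin σ b)

local notation "τ" => Equiv.swap a b

lemma conj_pow_swap (k : ℕ) : (τ * σ * τ) ^ k = τ * σ ^ k * τ := by
  induction k with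
  | zero => simp [Equiv.swap_mul_self]
  | succ k ih =>
    rw [pow_succ, pow_succ, ih]
    simp [mul_assoc, Equiv.swap_mul_self_mul]

lemma conj_iterate (k : ℕ) (x : Fin n) :
    (⇑(τ * σ * τ))^[k] x = τ ((⇑σ)^[k] (τ x)) := by
  rw [Equiv.Perm.iterate_eq_pow, Equiv.Perm.iterate_eq_pow, conj_pow_swap]; rfl

include hab in
lemma inOrb_tau (x : Fin n) : inOrb σ (τ x) x := by
  by_cases hx : x = a
  · subst hx; rw [Equiv.swap_apply_left]; exact inOrb_symm σ hab
  · by_cases hx' : x = b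
    · subst hx'; rw [Equiv.swap_apply_right]; exact hab
    · rw [Equiv.swap_apply_of_ne_of_ne hx hx']; exact inOrb_refl σ x

include hab in
lemma inOrb_conj_iff (x y : Fin n) : inOrb (τ * σ * τ) x y ↔ inOrb σ x y := by
  constructor
  · rintro ⟨k, hk⟩
    rw [conj_iterate] at hk
    have h1 : inOrb σ (τ x) (τ y) := ⟨k, by rw [← hk]; simp [Equiv.swap_apply_self]⟩
    exact inOrb_trans σ (inOrb_symm σ (inOrb_tau hab x))
      (inOrb_trans σ h1 (inOrb_tau hab y))
  · intro hxy
    have h1 : inOrb σ (τ x) (τ y) :=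
      inOrb_trans σ (inOrb_tau hab x)
        (inOrb_trans σ hxy (inOrb_symm σ (inOrb_tau hab y)))
    obtain ⟨k, hk⟩ := h1
    exact ⟨k, by rw [conj_iterate, hk]; simp [Equiv.swap_apply_self]⟩

include hab in
lemma cmin_conj_iff (x : Fin n) : Cmin (τ * σ * τ) x ↔ Cmin σ x := by
  rw [cmin_iff, cmin_iff]
  exact forall_congr' fun y => imp_congr_left (inOrb_conj_iff hab x y)

include hab hCa hCb in
lemma tau_fixes_cmin {x : Fin n} (hx : Cmin σ x) : τ x = x := by
  have hxa : x ≠ a := fun h => hCa (h ▸ hx)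
  have hxb : x ≠ b := fun h => hCb (h ▸ hx)
  exact Equiv.swap_apply_of_ne_of_ne hxa hxb

include hab hCa hCb in
lemma per_conj_eq {x : Fin n} (hx : Cmin σ x) :
    minimalPeriod ⇑(τ * σ * τ) x = minimalPeriod ⇑σ x := by
  have htx : τ x = x := tau_fixes_cmin hab hCa hCb hx
  have hiff : ∀ k, IsPeriodicPt (⇑(τ * σ * τ)) k x ↔ IsPeriodicPt (⇑σ) k x := by
    intro k
    show (⇑(τ * σ * τ))^[k] x = x ↔ (⇑σ)^[k] x = x
    rw [conj_iterate, htx]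
    constructor
    · intro h
      have := congrArg (⇑τ) h
      rw [htx] at this
      simpa [Equiv.swap_apply_self] using this
    · intro h; rw [h, htx]
  have h1 : IsPeriodicPt (⇑(τ * σ * τ)) (minimalPeriod ⇑σ x) x :=
    (hiff _).2 (isPeriodicPt_minimalPeriod _ _)
  have h2 : IsPeriodicPt (⇑σ) (minimalPeriod ⇑(τ * σ * τ) x) x :=
    (hiff _).1 (isPeriodicPt_minimalPeriod _ _)
  exact le_antisymm (h1.minimalPeriod_le (per_pos σ x))
    (h2.minimalPeriod_le (minimalPeriod_pos_of_mem_periodicPts (perm_periodicPt _ x)))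

include hab hCa hCb in
lemma cycList_conj {x : Fin n} (hx : Cmin σ x) :
    cycList (τ * σ * τ) x = (cycList σ x).map τ := by
  have htx : τ x = x := tau_fixes_cmin hab hCa hCb hx
  unfold cycList
  rw [per_conj_eq hab hCa hCb hx, List.map_map]
  refine List.map_congr_left ?_
  intro k _
  simp only [Function.comp_apply]
  rw [conj_iterate, htx]

include hab in
lemma mins_conj : mins (τ * σ * τ) = mins σ := by
  unfold mins
  refine List.filter_congr ?_
  intro x _
  simp only [decide_eq_decide]
  exact cmin_conj_iff hab x

include hab hCa hCb in
lemma Wl_conj : Wl (τ * σ * τ) = (Wl σ).map τ := by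
  unfold Wl
  rw [mins_conj hab, List.map_flatMap]
  refine List.flatMap_congr ?_
  intro x hx
  exact cycList_conj hab hCa hCb ((mem_mins σ).1 hx)
end Conj

lemma Wl_rtl (p q : ℕ) (hpq : p < q) (hq : q < (Wl σ).length)
    (h : Cmin σ ((Wl σ)[p]'(by omega))) : (Wl σ)[p]'(by omega) < (Wl σ)[q] :=
  flat_rtl σ (fun x hx => (mem_mins σ).1 hx) (mins_sorted σ) p q hpq hq h

lemma Wl_succ (p : ℕ) (hp : p + 1 < (Wl σ).length) (h : ¬ Cmin σ ((Wl σ)[p+1])) :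
    (Wl σ)[p+1] = σ ((Wl σ)[p]'(by omega)) :=
  flat_succ σ (fun x hx => (mem_mins σ).1 hx) p hp h

noncomputable def gmap (hn0 : 0 < n) (i : ℕ) (σ : Equiv.Perm (Fin n)) : Equiv.Perm (Fin n) :=
  Equiv.swap ((Wl σ).getD (i-1) ⟨0, hn0⟩) ((Wl σ).getD i ⟨0, hn0⟩) * σ *
    Equiv.swap ((Wl σ).getD (i-1) ⟨0, hn0⟩) ((Wl σ).getD i ⟨0, hn0⟩)

section Key
variable {σ} (hn0 : 0 < n) {i j : ℕ} (hi : 0 < i) (hij : i < j) (hj : j < n)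

include hi hij hj in
lemma key (hja : (Wl σ).getD j ⟨0, hn0⟩ < (Wl σ).getD (i-1) ⟨0, hn0⟩)
    (hjb : (Wl σ).getD j ⟨0, hn0⟩ < (Wl σ).getD i ⟨0, hn0⟩) :
    (Wl (gmap hn0 i σ)).getD (i-1) ⟨0, hn0⟩ = (Wl σ).getD i ⟨0, hn0⟩ ∧
    (Wl (gmap hn0 i σ)).getD i ⟨0, hn0⟩ = (Wl σ).getD (i-1) ⟨0, hn0⟩ ∧
    (Wl (gmap hn0 i σ)).getD j ⟨0, hn0⟩ = (Wl σ).getD j ⟨0, hn0⟩ ∧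
    gmap hn0 i (gmap hn0 i σ) = σ := by
  have hlen : (Wl σ).length = n := Wl_length σ
  set d : Fin n := ⟨0, hn0⟩
  have hi1 : i - 1 < (Wl σ).length := by omega
  have hii : i < (Wl σ).length := by omega
  have hjj : j < (Wl σ).length := by omega
  set A := (Wl σ).getD (i-1) d with hA
  set B := (Wl σ).getD i d with hB
  set Cj := (Wl σ).getD j d with hC
  have hgA : (Wl σ)[i-1] = A := (List.getD_eq_getElem _ _ hi1).symm
  have hgB : (Wl σ)[i] = B := (List.getD_eq_getElem _ _ hii).symm
  have hgC : (Wl σ)[j] = Cj := (List.getD_eq_getElem _ _ hjj).symm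
  have hCmins : ∀ x ∈ mins σ, Cmin σ x := fun x hx => (mem_mins σ).1 hx
  have hCa : ¬ Cmin σ A := by
    intro h
    have := Wl_rtl σ (i-1) j (by omega) hjj (by rw [hgA]; exact h)
    rw [hgA, hgC] at this
    exact absurd hja (not_lt_of_gt this)
  have hCb : ¬ Cmin σ B := by
    intro h
    have := Wl_rtl σ i j (by omega) hjj (by rw [hgB]; exact h)
    rw [hgB, hgC] at this
    exact absurd hjb (not_lt_of_gt this)
  have hsucc : B = σ A := by
    have h1 : (i - 1) + 1 = i := by omega
    have := Wl_succ σ (i-1) (by omega) (by simp only [h1]; rw [hgB]; exact hCb)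
    simp only [h1] at this
    rw [hgA, hgB] at this
    exact this
  have hab : inOrb σ A B := hsucc ▸ inOrb_apply σ A
  have hgm : gmap hn0 i σ = Equiv.swap A B * σ * Equiv.swap A B := rfl
  have hW' : Wl (gmap hn0 i σ) = (Wl σ).map (Equiv.swap A B) := by
    rw [hgm]; exact Wl_conj hab hCa hCb
  have hlen' : (Wl (gmap hn0 i σ)).length = n := Wl_length _
  have hd1 : (Wl (gmap hn0 i σ)).getD (i-1) d = Equiv.swap A B A := by
    rw [List.getD_eq_getElem _ _ (by omega : i - 1 < (Wl (gmap hn0 i σ)).length)]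
    have : ∀ (h : i - 1 < ((Wl σ).map (Equiv.swap A B)).length),
        ((Wl σ).map (Equiv.swap A B))[i-1] = Equiv.swap A B A := by
      intro h; rw [List.getElem_map, hgA]
    simp only [hW']
    exact this _
  have hd2 : (Wl (gmap hn0 i σ)).getD i d = Equiv.swap A B B := by
    rw [List.getD_eq_getElem _ _ (by omega : i < (Wl (gmap hn0 i σ)).length)]
    have : ∀ (h : i < ((Wl σ).map (Equiv.swap A B)).length),
        ((Wl σ).map (Equiv.swap A B))[i] = Equiv.swap A B B := by
      intro h; rw [List.getElem_map, hgB]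
    simp only [hW']
    exact this _
  have hd3 : (Wl (gmap hn0 i σ)).getD j d = Equiv.swap A B Cj := by
    rw [List.getD_eq_getElem _ _ (by omega : j < (Wl (gmap hn0 i σ)).length)]
    have : ∀ (h : j < ((Wl σ).map (Equiv.swap A B)).length),
        ((Wl σ).map (Equiv.swap A B))[j] = Equiv.swap A B Cj := by
      intro h; rw [List.getElem_map, hgC]
    simp only [hW']
    exact this _
  have e1 : Equiv.swap A B A = B := Equiv.swap_apply_left A B
  have e2 : Equiv.swap A B B = A := Equiv.swap_apply_right A B
  have e3 : Equiv.swap A B Cj = Cj :=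
    Equiv.swap_apply_of_ne_of_ne (ne_of_lt hja) (ne_of_lt hjb)
  refine ⟨by rw [hd1, e1], by rw [hd2, e2], by rw [hd3, e3], ?_⟩
  have : gmap hn0 i (gmap hn0 i σ) =
      Equiv.swap B A * (Equiv.swap A B * σ * Equiv.swap A B) * Equiv.swap B A := by
    rw [gmap, hd1, hd2, e1, e2, hgm]
  rw [this, Equiv.swap_comm B A]
  simp [mul_assoc, Equiv.swap_mul_self_mul, Equiv.mul_swap_mul_self]
end Key

lemma flatten_length : (flattenPerm σ).length = n := by
  rw [flattenPerm_eq]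
  rw [List.length_map]
  exact Wl_length σ

lemma flatten_getD (hn0 : 0 < n) (p : ℕ) (hp : p < n) :
    (flattenPerm σ).getD p 0 = ((Wl σ).getD p ⟨0, hn0⟩ : ℕ) + 1 := by
  have h1 : p < (flattenPerm σ).length := by rw [flatten_length]; omega
  have h2 : p < (Wl σ).length := by rw [Wl_length]; omega
  rw [List.getD_eq_getElem _ _ h1, List.getD_eq_getElem _ _ h2]
  simp only [flattenPerm_eq]
  rw [List.getElem_map]

lemma pair_card (i j : ℕ) (hi : 0 < i) (hij : i < j) (hj : j < n) :
    (Finset.univ.filter (fun σ : Equiv.Perm (Fin n) =>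
      (flattenPerm σ).getD j 0 < (flattenPerm σ).getD (i-1) 0 ∧
      (flattenPerm σ).getD (i-1) 0 < (flattenPerm σ).getD i 0)).card =
    (Finset.univ.filter (fun σ : Equiv.Perm (Fin n) =>
      (flattenPerm σ).getD j 0 < (flattenPerm σ).getD i 0 ∧
      (flattenPerm σ).getD i 0 < (flattenPerm σ).getD (i-1) 0)).card := by
  have hn0 : 0 < n := by omega
  have hi1n : i - 1 < n := by omega
  have hin : i < n := by omega
  have fget : ∀ (σ : Equiv.Perm (Fin n)) (p : ℕ), p < n →
      (flattenPerm σ).getD p 0 = ((Wl σ).getD p ⟨0, hn0⟩ : ℕ) + 1 :=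
    fun σ p hp => flatten_getD σ hn0 p hp
  refine Finset.card_bij' (fun σ _ => gmap hn0 i σ) (fun σ _ => gmap hn0 i σ) ?_ ?_ ?_ ?_
  · intro σ hσ
    simp only [Finset.mem_filter, Finset.mem_univ, true_and] at hσ ⊢
    rw [fget σ j hj, fget σ (i-1) hi1n, fget σ i hin] at hσ
    have hja : (Wl σ).getD j ⟨0, hn0⟩ < (Wl σ).getD (i-1) ⟨0, hn0⟩ := by
      rw [Fin.lt_def]; omega
    have hjb : (Wl σ).getD j ⟨0, hn0⟩ < (Wl σ).getD i ⟨0, hn0⟩ := by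
      rw [Fin.lt_def] at *; omega
    obtain ⟨e1, e2, e3, _⟩ := key hn0 hi hij hj hja hjb
    rw [fget _ j hj, fget _ (i-1) hi1n, fget _ i hin, e1, e2, e3]
    rw [Fin.lt_def] at hja hjb
    constructor <;> omega
  · intro σ hσ
    simp only [Finset.mem_filter, Finset.mem_univ, true_and] at hσ ⊢
    rw [fget σ j hj, fget σ (i-1) hi1n, fget σ i hin] at hσ
    have hjb : (Wl σ).getD j ⟨0, hn0⟩ < (Wl σ).getD i ⟨0, hn0⟩ := by
      rw [Fin.lt_def]; omega
    have hja : (Wl σ).getD j ⟨0, hn0⟩ < (Wl σ).getD (i-1) ⟨0, hn0⟩ := by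
      rw [Fin.lt_def] at *; omega
    obtain ⟨e1, e2, e3, _⟩ := key hn0 hi hij hj hja hjb
    rw [fget _ j hj, fget _ (i-1) hi1n, fget _ i hin, e1, e2, e3]
    rw [Fin.lt_def] at hja hjb
    constructor <;> omega
  · intro σ hσ
    simp only [Finset.mem_filter, Finset.mem_univ, true_and] at hσ
    rw [fget σ j hj, fget σ (i-1) hi1n, fget σ i hin] at hσ
    have hja : (Wl σ).getD j ⟨0, hn0⟩ < (Wl σ).getD (i-1) ⟨0, hn0⟩ := by
      rw [Fin.lt_def]; omega
    have hjb : (Wl σ).getD j ⟨0, hn0⟩ < (Wl σ).getD i ⟨0, hn0⟩ := by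
      rw [Fin.lt_def] at *; omega
    exact (key hn0 hi hij hj hja hjb).2.2.2
  · intro σ hσ
    simp only [Finset.mem_filter, Finset.mem_univ, true_and] at hσ
    rw [fget σ j hj, fget σ (i-1) hi1n, fget σ i hin] at hσ
    have hjb : (Wl σ).getD j ⟨0, hn0⟩ < (Wl σ).getD i ⟨0, hn0⟩ := by
      rw [Fin.lt_def]; omega
    have hja : (Wl σ).getD j ⟨0, hn0⟩ < (Wl σ).getD (i-1) ⟨0, hn0⟩ := by
      rw [Fin.lt_def] at *; omega
    exact (key hn0 hi hij hj hja hjb).2.2.2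


theorem total_occurrences_231_eq_321 (n : ℕ) (hn : 2 ≤ n) :
    (∑ σ : Equiv.Perm (Fin n), vinOcc (fun a b c => c < a ∧ a < b) (flattenPerm σ))
      = ∑ σ : Equiv.Perm (Fin n), vinOcc (fun a b c => c < b ∧ b < a) (flattenPerm σ) := by
  have hsum : ∀ (P : ℕ → ℕ → ℕ → Prop),
      (∑ σ : Equiv.Perm (Fin n), vinOcc P (flattenPerm σ)) =
      ∑ p ∈ Finset.range n ×ˢ Finset.range n, ∑ σ : Equiv.Perm (Fin n),
        (if 0 < p.1 ∧ p.1 < p.2 ∧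
            P ((flattenPerm σ).getD (p.1 - 1) 0) ((flattenPerm σ).getD p.1 0)
              ((flattenPerm σ).getD p.2 0) then 1 else 0) := by
    intro P
    rw [Finset.sum_comm]
    refine Finset.sum_congr rfl ?_
    intro σ _
    rw [vinOcc, flatten_length, Finset.card_filter]
  rw [hsum, hsum]
  refine Finset.sum_congr rfl ?_
  intro p hp
  simp only [Finset.mem_product, Finset.mem_range] at hp
  by_cases hc : 0 < p.1 ∧ p.1 < p.2
  · simp only [hc.1, hc.2, true_and]
    rw [Finset.sum_boole, Finset.sum_boole]
    norm_cast
    exact pair_card p.1 p.2 hc.1 hc.2 hp.2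
  · rcases not_and_or.1 hc with h | h <;>
      simp [h]
end

section
/- Let g_n(0) for the pattern 23-1 be defined by g_1(0) = 1 and the recurrence g_n(0) = 2·∑_{j=1}^{n-1} C(n-2, j-1) · g_{n-j}(0) for n ≥ 2. Then g_n(0) = ∑_{k=1}^{n-1} 2^k · S(n-1, k) for all n ≥ 2. -/
/-- Stirling numbers of the second kind. -/
def stirling2 : ℕ → ℕ → ℕ
  | 0, 0 => 1
  | 0, _ + 1 => 0
  | _ + 1, 0 => 0
  | n + 1, k + 1 => (k + 1) * stirling2 n (k + 1) + stirling2 n k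

lemma stirling2_eq_zero : ∀ m k, m < k → stirling2 m k = 0 := by
  intro m
  induction m with
  | zero => intro k hk; cases k with
    | zero => omega
    | succ k => rfl
  | succ m ih =>
    intro k hk
    cases k with
    | zero => omega
    | succ k =>
      show (k+1) * stirling2 m (k+1) + stirling2 m k = 0
      rw [ih (k+1) (by omega), ih k (by omega)]
      ring

lemma stirling2_key : ∀ m k, stirling2 (m+1) (k+1) =
    ∑ i ∈ Finset.range (m+1), Nat.choose m i * stirling2 i k := by
  intro m
  induction m with
  | zero => intro k; simp [stirling2]
  | succ m ih =>
    intro k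
    have h1 : ∑ i ∈ Finset.range (m+2), Nat.choose (m+1) i * stirling2 i k
        = stirling2 0 k + ∑ i ∈ Finset.range (m+1),
            ((Nat.choose m i) * stirling2 (i+1) k + (Nat.choose m (i+1)) * stirling2 (i+1) k) := by
      rw [Finset.sum_range_succ']
      simp [Nat.choose_succ_succ, add_mul, add_comm]
    have h2 : stirling2 0 k + ∑ i ∈ Finset.range (m+1), Nat.choose m (i+1) * stirling2 (i+1) k
        = ∑ i ∈ Finset.range (m+1), Nat.choose m i * stirling2 i k := by
      have := Finset.sum_range_succ' (fun i => Nat.choose m i * stirling2 i k) (m+1)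
      have h3 := Finset.sum_range_succ (fun i => Nat.choose m i * stirling2 i k) (m+1)
      rw [h3, Nat.choose_succ_self, zero_mul, add_zero] at this
      rw [this]
      simp [add_comm]
    rw [Finset.sum_add_distrib] at h1
    rw [show stirling2 0 k + (∑ i ∈ Finset.range (m+1), Nat.choose m i * stirling2 (i+1) k
          + ∑ i ∈ Finset.range (m+1), Nat.choose m (i+1) * stirling2 (i+1) k)
        = (∑ i ∈ Finset.range (m+1), Nat.choose m i * stirling2 (i+1) k)
          + (stirling2 0 k + ∑ i ∈ Finset.range (m+1), Nat.choose m (i+1) * stirling2 (i+1) k)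
        by ring, h2, ← ih k] at h1
    rw [h1]
    cases k with
    | zero =>
      have hz : ∀ i, stirling2 (i+1) 0 = 0 := fun i => rfl
      simp only [hz, mul_zero, Finset.sum_const_zero, zero_add]
      show (0+1) * stirling2 (m+1) (0+1) + stirling2 (m+1) 0 = stirling2 (m+1) (0+1)
      simp [show stirling2 (m+1) 0 = 0 from rfl]
    | succ k =>
      have hs : ∀ i, stirling2 (i+1) (k+1) = (k+1) * stirling2 i (k+1) + stirling2 i k :=
        fun i => rfl
      simp only [hs, Nat.mul_add, Finset.sum_add_distrib]
      have e1 : ∑ x ∈ Finset.range (m+1), Nat.choose m x * ((k+1) * stirling2 x (k+1))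
          = (k+1) * stirling2 (m+1) (k+1+1) := by
        rw [ih (k+1), Finset.mul_sum]
        apply Finset.sum_congr rfl; intros; ring
      rw [e1, ← ih k]
      show (k+1+1) * stirling2 (m+1) (k+1+1) + stirling2 (m+1) (k+1) = _
      ring

def aa (m : ℕ) : ℕ := ∑ k ∈ Finset.range (m+1), 2^k * stirling2 m k

lemma aa_trunc (i m : ℕ) (h : i ≤ m) :
    ∑ k ∈ Finset.range (m+1), 2^k * stirling2 i k = aa i := by
  unfold aa
  symm
  apply Finset.sum_subset
  · exact Finset.range_subset_range.2 (by omega)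
  · intro k _ hk
    rw [stirling2_eq_zero i k (by simp at hk ⊢; omega)]
    ring

lemma aa_succ (m : ℕ) : aa (m+1) = 2 * ∑ i ∈ Finset.range (m+1), Nat.choose m i * aa i := by
  unfold aa
  rw [Finset.sum_range_succ']
  have h0 : (2:ℕ)^0 * stirling2 (m+1) 0 = 0 := by
    simp [show stirling2 (m+1) 0 = 0 from rfl]
  rw [h0, add_zero]
  have : ∀ k, 2^(k+1) * stirling2 (m+1) (k+1)
      = ∑ i ∈ Finset.range (m+1), 2 * (Nat.choose m i * (2^k * stirling2 i k)) := by
    intro k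
    rw [stirling2_key m k, Finset.mul_sum]
    apply Finset.sum_congr rfl; intros; ring
  simp only [this]
  rw [Finset.sum_comm, Finset.mul_sum]
  apply Finset.sum_congr rfl
  intro i hi
  simp only [Finset.mem_range] at hi
  rw [← Finset.mul_sum, ← Finset.mul_sum, aa_trunc i m (by omega)]
  rfl

lemma aa_eq_Icc (m : ℕ) (hm : 1 ≤ m) :
    ∑ k ∈ Finset.Icc 1 m, 2^k * stirling2 m k = aa m := by
  unfold aa
  rw [show Finset.Icc 1 m = Finset.Ico 1 (m+1) from (Finset.Ico_add_one_right_eq_Icc 1 m).symm,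
    Finset.sum_Ico_eq_sum_range, Finset.sum_range_succ']
  have h0 : (2:ℕ)^0 * stirling2 m 0 = 0 := by
    obtain ⟨m', rfl⟩ := Nat.exists_eq_add_of_le hm
    simp [show stirling2 (1+m') 0 = 0 by rw [Nat.add_comm]; rfl]
  rw [h0, add_zero]
  apply Finset.sum_congr (by norm_num)
  intro i _
  rw [Nat.add_comm 1 i]

theorem avoid_231_recurrence_solution (g : ℕ → ℕ) (h1 : g 1 = 1)
    (hrec : ∀ n, 2 ≤ n →
      g n = 2 * ∑ j ∈ Finset.Icc 1 (n - 1), Nat.choose (n - 2) (j - 1) * g (n - j)) :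
    ∀ n, 2 ≤ n → g n = ∑ k ∈ Finset.Icc 1 (n - 1), 2 ^ k * stirling2 (n - 1) k := by
  intro n
  induction n using Nat.strong_induction_on with
  | _ n ih =>
    intro hn
    rw [hrec n hn, aa_eq_Icc (n-1) (by omega)]
    have hg : ∀ j ∈ Finset.Icc 1 (n-1),
        Nat.choose (n-2) (j-1) * g (n-j) = Nat.choose (n-2) (j-1) * aa (n-2-(j-1)) := by
      intro j hj
      simp only [Finset.mem_Icc] at hj
      congr 1
      by_cases hj2 : n - j = 1
      · rw [hj2, h1, show n-2-(j-1) = 0 by omega]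
        simp [aa, stirling2]
      · have h2 : 2 ≤ n - j := by omega
        rw [ih (n-j) (by omega) h2, aa_eq_Icc (n-j-1) (by omega),
          show n-2-(j-1) = n-j-1 by omega]
    rw [Finset.sum_congr rfl hg, show n-1 = (n-2)+1 by omega, aa_succ]
    congr 1
    rw [show Finset.Icc 1 (n-2+1) = Finset.Ico 1 (n-2+1+1) from
        (Finset.Ico_add_one_right_eq_Icc 1 (n-2+1)).symm,
      Finset.sum_Ico_eq_sum_range, show n-2+1+1-1 = n-2+1 by omega,
      ← Finset.sum_range_reflect]
    apply Finset.sum_congr rfl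
    intro i hi
    simp only [Finset.mem_range] at hi
    rw [show 1 + (n-2+1-1-i) - 1 = n-2-i by omega,
      show n-2-(n-2-i) = i by omega, Nat.choose_symm (by omega)]
end

section
/- For 3 ≤ i ≤ n-1, the number of permutations π of [n] such that in Flatten(π) the letter i directly precedes some member of [i-1] equals (i-2)·(n-1)!. -/
open scoped Classical
set_option maxHeartbeats 1000000

lemma pair_infix_iff_getElem {α : Type*} {l : List α} {a b : α} :
    [a, b] <:+: l ↔ ∃ k, ∃ h : k + 1 < l.length, l[k] = a ∧ l[k+1]'h = b := by
  constructor
  · rintro ⟨s, t, rfl⟩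
    have hlen : s.length + 1 < (s ++ [a, b] ++ t).length := by simp
    refine ⟨s.length, hlen, ?_, ?_⟩
    · simp only [List.append_assoc]
      rw [List.getElem_append_right (le_refl _)]
      simp
    · simp only [List.append_assoc]
      rw [List.getElem_append_right (by omega : s.length ≤ s.length + 1)]
      simp
  · rintro ⟨k, h, ha, hb⟩
    refine ⟨l.take k, l.drop (k+2), ?_⟩
    have h1 : l[k]'(by omega) :: l.drop (k+1) = l.drop k := List.getElem_cons_drop (by omega)
    have h2 : l[k+1]'h :: l.drop (k+2) = l.drop (k+1) := List.getElem_cons_drop h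
    conv_rhs => rw [← List.take_append_drop k l]
    rw [List.append_assoc]
    congr 1
    rw [← h1, ← h2, ha, hb]
    simp

lemma pair_infix_append {α : Type*} {u v : List α} {a b : α} :
    [a, b] <:+: u ++ v ↔
      [a, b] <:+: u ∨ [a, b] <:+: v ∨ (u.getLast? = some a ∧ v.head? = some b) := by
  constructor
  · intro h
    induction u with
    | nil => simp only [List.nil_append] at h; right; left; exact h
    | cons x u' ih =>
      rcases h with ⟨s, t, hst⟩
      cases s with
      | nil =>
        simp only [List.nil_append, List.cons_append] at hst
        injection hst with h1 h2
        subst h1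
        cases u' with
        | nil =>
          right; right
          simp only [List.nil_append] at h2
          exact ⟨by simp, by rw [← h2]; simp⟩
        | cons c u'' =>
          left
          simp only [List.cons_append] at h2
          injection h2 with h3 _
          subst h3
          exact ⟨[], u'', by simp⟩
      | cons y s' =>
        simp only [List.cons_append] at hst
        injection hst with h1 h2
        subst h1
        have h' : [a, b] <:+: u' ++ v := ⟨s', t, h2⟩
        rcases ih h' with h1 | h1 | ⟨h1, h2⟩
        · left; exact h1.trans (List.suffix_cons y u').isInfix
        · right; left; exact h1
        · right; right
          refine ⟨?_, h2⟩
          rcases List.getLast?_eq_some_iff.1 h1 with ⟨ys, rfl⟩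
          rw [List.getLast?_eq_some_iff]
          exact ⟨y :: ys, by simp⟩
  · rintro (h | h | ⟨h1, h2⟩)
    · exact h.trans (List.prefix_append u v).isInfix
    · exact h.trans (List.suffix_append u v).isInfix
    · rcases List.getLast?_eq_some_iff.1 h1 with ⟨ys, rfl⟩
      rcases List.head?_eq_some_iff.1 h2 with ⟨zs, rfl⟩
      exact ⟨ys, zs, by simp⟩

lemma pair_infix_flatMap {α β : Type*} {S : List α} {f : α → List β}
    (hne : ∀ s ∈ S, f s ≠ []) {a b : β} :
    [a, b] <:+: S.flatMap f ↔
      (∃ s ∈ S, [a, b] <:+: f s) ∨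
      ∃ s t, [s, t] <:+: S ∧ (f s).getLast? = some a ∧ (f t).head? = some b := by
  induction S with
  | nil =>
    constructor
    · intro h; exact absurd (List.eq_nil_of_infix_nil h) (by simp)
    · rintro (⟨s, hs, h⟩ | ⟨s, t, hst, h1, h2⟩)
      · simp at hs
      · exact absurd (List.eq_nil_of_infix_nil hst) (by simp)
  | cons c rest ih =>
    rw [List.flatMap_cons, pair_infix_append]
    constructor
    · rintro (h | h | ⟨h1, h2⟩)
      · exact Or.inl ⟨c, by simp, h⟩
      · rcases (ih (fun s hs => hne s (by simp [hs]))).1 h with ⟨s, hs, h'⟩ | ⟨s, t, hst, h1, h2⟩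
        · exact Or.inl ⟨s, by simp [hs], h'⟩
        · exact Or.inr ⟨s, t, hst.trans (List.suffix_cons c rest).isInfix, h1, h2⟩
      · cases rest with
        | nil => simp at h2
        | cons d rest' =>
          refine Or.inr ⟨c, d, ⟨[], rest', by simp⟩, h1, ?_⟩
          rw [List.flatMap_cons, List.head?_append_of_ne_nil _ (hne d (by simp))] at h2
          exact h2
    · rintro (⟨s, hs, h⟩ | ⟨s, t, hst, h1, h2⟩)
      · rcases hs with _ | hs
        · exact Or.inl h
        · right; left
          refine ((ih (fun s hs => hne s (by simp [hs]))).2 (Or.inl ⟨s, by assumption, h⟩))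
      · -- [s,t] <:+: c :: rest
        rcases hst with ⟨u, v, huv⟩
        cases u with
        | nil =>
          simp only [List.nil_append, List.cons_append] at huv
          injection huv with e1 e2
          subst e1
          cases rest with
          | nil => simp at e2
          | cons d rest' =>
            injection e2 with e3 _
            subst e3
            right; right
            refine ⟨h1, ?_⟩
            rw [List.flatMap_cons, List.head?_append_of_ne_nil _ (hne t (by simp))]
            exact h2
        | cons x u' =>
          simp only [List.cons_append] at huv
          injection huv with e1 e2
          right; left
          exact (ih (fun s hs => hne s (by simp [hs]))).2 (Or.inr ⟨s, t, ⟨u', v, e2⟩, h1, h2⟩)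

namespace Flat
open Equiv Function List

variable {n : ℕ} (σ : Equiv.Perm (Fin n))

lemma period_pos (x : Fin n) : 0 < Function.minimalPeriod (⇑σ) x :=
  Function.IsPeriodicPt.minimalPeriod_pos (orderOf_pos σ)
    (by show (⇑σ)^[orderOf σ] x = x
        rw [Equiv.Perm.iterate_eq_pow, pow_orderOf_eq_one]; rfl)

lemma cycList_length (x : Fin n) : (cycList σ x).length = Function.minimalPeriod (⇑σ) x := by
  simp [cycList]

lemma cycList_getElem? (x : Fin n) (k : ℕ) (hk : k < Function.minimalPeriod (⇑σ) x) :
    (cycList σ x)[k]? = some ((⇑σ)^[k] x) := by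
  unfold cycList
  rw [List.getElem?_map, List.getElem?_range hk]; rfl

lemma cycList_ne_nil (x : Fin n) : cycList σ x ≠ [] := by
  intro h
  have h2 := congrArg List.length h
  rw [cycList_length] at h2
  have := period_pos σ x
  simp at h2; omega

lemma cycList_head? (x : Fin n) : (cycList σ x).head? = some x := by
  rw [List.head?_eq_getElem?, cycList_getElem? σ x 0 (period_pos σ x)]
  rfl

lemma cycList_getLast? (x : Fin n) :
    (cycList σ x).getLast? = some ((⇑σ)^[Function.minimalPeriod (⇑σ) x - 1] x) := by
  rw [List.getLast?_eq_getElem?, cycList_length,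
    cycList_getElem? σ x _ (by have := period_pos σ x; omega)]

lemma sigma_iterate_pred (x : Fin n) :
    σ ((⇑σ)^[Function.minimalPeriod (⇑σ) x - 1] x) = x := by
  have h : (⇑σ)^[Function.minimalPeriod (⇑σ) x] x = x := Function.iterate_minimalPeriod
  have hp := period_pos σ x
  have h2 : Function.minimalPeriod (⇑σ) x = (Function.minimalPeriod (⇑σ) x - 1) + 1 := by omega
  conv_rhs => rw [← h, h2, Function.iterate_succ_apply']

lemma mem_cycList (x y : Fin n) : y ∈ cycList σ x ↔ σ.SameCycle x y := by
  constructor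
  · intro h
    simp only [cycList, List.mem_map, List.mem_range] at h
    obtain ⟨k, _, hk⟩ := h
    exact ⟨(k : ℤ), by rw [zpow_natCast, ← Equiv.Perm.iterate_eq_pow]; exact hk⟩
  · intro h
    obtain ⟨k, -, -, hk⟩ := h.exists_pow_eq σ
    simp only [cycList, List.mem_map, List.mem_range]
    refine ⟨k % Function.minimalPeriod (⇑σ) x, Nat.mod_lt _ (period_pos σ x), ?_⟩
    rw [Function.iterate_mod_minimalPeriod_eq, Equiv.Perm.iterate_eq_pow]
    exact hk

lemma nodup_cycList (x : Fin n) : (cycList σ x).Nodup := by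
  refine List.Nodup.map_on ?_ List.nodup_range
  intro a ha b hb hab
  exact Function.iterate_injOn_Iio_minimalPeriod (List.mem_range.1 ha) (List.mem_range.1 hb) hab

lemma period_le (x : Fin n) : Function.minimalPeriod (⇑σ) x ≤ n := by
  have h := (nodup_cycList σ x).length_le_card
  rwa [cycList_length, Fintype.card_fin] at h

lemma pair_infix_cycList {x y z : Fin n} :
    [y, z] <:+: cycList σ x ↔
      ∃ k, k + 1 < Function.minimalPeriod (⇑σ) x ∧ y = (⇑σ)^[k] x ∧ z = (⇑σ)^[k+1] x := by
  rw [pair_infix_iff_getElem]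
  constructor
  · rintro ⟨k, h, ha, hb⟩
    rw [cycList_length] at h
    refine ⟨k, h, ?_, ?_⟩
    · have := cycList_getElem? σ x k (by omega)
      rw [List.getElem?_eq_getElem (by rw [cycList_length]; omega)] at this
      simp only [Option.some.injEq] at this
      rw [← ha, this]
    · have := cycList_getElem? σ x (k+1) h
      rw [List.getElem?_eq_getElem (by rw [cycList_length]; omega)] at this
      simp only [Option.some.injEq] at this
      rw [← hb, this]
  · rintro ⟨k, h, ha, hb⟩
    refine ⟨k, by rw [cycList_length]; exact h, ?_, ?_⟩
    · have := cycList_getElem? σ x k (by omega)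
      rw [List.getElem?_eq_getElem (by rw [cycList_length]; omega)] at this
      simp only [Option.some.injEq] at this
      rw [this, ha]
    · have := cycList_getElem? σ x (k+1) h
      rw [List.getElem?_eq_getElem (by rw [cycList_length]; omega)] at this
      simp only [Option.some.injEq] at this
      rw [this, hb]

lemma infix_step {x y z : Fin n} (h : [y, z] <:+: cycList σ x) : z = σ y ∧ z ≠ x := by
  rw [pair_infix_cycList] at h
  obtain ⟨k, hk, rfl, rfl⟩ := h
  refine ⟨(Function.iterate_succ_apply' (⇑σ) k x), ?_⟩
  intro hzx
  have h0 : (⇑σ)^[k+1] x = (⇑σ)^[0] x := by simpa using hzx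
  have := Function.iterate_injOn_Iio_minimalPeriod (x := x) (f := ⇑σ)
    (Set.mem_Iio.2 hk) (Set.mem_Iio.2 (by have := period_pos σ x; omega)) h0
  omega

lemma infix_step' {x y z : Fin n} (hy : y ∈ cycList σ x) (hz : z = σ y) (hzx : z ≠ x) :
    [y, z] <:+: cycList σ x := by
  simp only [cycList, List.mem_map, List.mem_range] at hy
  obtain ⟨k, hk, rfl⟩ := hy
  rw [pair_infix_cycList]
  refine ⟨k, ?_, rfl, by rw [hz, Function.iterate_succ_apply']⟩
  rcases Nat.lt_or_ge (k+1) (Function.minimalPeriod (⇑σ) x) with h | h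
  · exact h
  · exfalso
    have hk1 : k + 1 = Function.minimalPeriod (⇑σ) x := by omega
    apply hzx
    rw [hz, ← Function.iterate_succ_apply' (⇑σ) k x]
    show (⇑σ)^[k+1] x = x
    rw [hk1, Function.iterate_minimalPeriod]

def isMinP (σ : Equiv.Perm (Fin n)) (x : Fin n) : Prop := ∀ y, σ.SameCycle x y → x ≤ y

lemma minPred_iff (x : Fin n) : (∀ k < n, x ≤ (⇑σ)^[k] x) ↔ isMinP σ x := by
  constructor
  · intro h y hy
    obtain ⟨k, -, -, hk⟩ := hy.exists_pow_eq σ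
    have h2 : (⇑σ)^[k % Function.minimalPeriod (⇑σ) x] x = y := by
      rw [Function.iterate_mod_minimalPeriod_eq, Equiv.Perm.iterate_eq_pow]; exact hk
    have hlt : k % Function.minimalPeriod (⇑σ) x < n :=
      lt_of_lt_of_le (Nat.mod_lt _ (period_pos σ x)) (period_le σ x)
    rw [← h2]
    exact h _ hlt
  · intro h k _
    exact h _ ⟨(k : ℤ), by rw [zpow_natCast, ← Equiv.Perm.iterate_eq_pow]⟩

noncomputable def starts (σ : Equiv.Perm (Fin n)) : List (Fin n) :=
  (List.finRange n).filter (fun x => decide (∀ k < n, x ≤ (⇑σ)^[k] x))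

lemma mem_starts (x : Fin n) : x ∈ starts σ ↔ isMinP σ x := by
  rw [starts, List.mem_filter]
  simp only [List.mem_finRange, true_and, decide_eq_true_eq]
  exact minPred_iff σ x

lemma pairwise_starts : List.Pairwise (· < ·) (starts σ) :=
  (List.pairwise_lt_finRange n).filter _

lemma exists_min (x : Fin n) : ∃ m, σ.SameCycle x m ∧ isMinP σ m := by
  classical
  have hne : (Finset.univ.filter (fun y => σ.SameCycle x y)).Nonempty :=
    ⟨x, by simp [Equiv.Perm.SameCycle.refl]⟩
  have hmem := Finset.min'_mem _ hne
  rw [Finset.mem_filter] at hmem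
  refine ⟨_, hmem.2, fun y hy => Finset.min'_le _ _ ?_⟩
  rw [Finset.mem_filter]
  exact ⟨Finset.mem_univ _, hmem.2.trans hy⟩

lemma min_unique {a b : Fin n} (ha : isMinP σ a) (hb : isMinP σ b) (h : σ.SameCycle a b) :
    a = b :=
  le_antisymm (ha b h) (hb a h.symm)

noncomputable def L (σ : Equiv.Perm (Fin n)) : List (Fin n) := (starts σ).flatMap (cycList σ)

lemma mem_L (y : Fin n) : y ∈ L σ := by
  obtain ⟨m, hsc, hmin⟩ := exists_min σ y
  rw [L, List.mem_flatMap]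
  exact ⟨m, (mem_starts σ m).2 hmin, (mem_cycList σ m y).2 hsc.symm⟩

lemma nodup_L : (L σ).Nodup := by
  rw [L, List.flatMap_def, List.nodup_flatten]
  constructor
  · intro l hl
    rw [List.mem_map] at hl
    obtain ⟨s, -, rfl⟩ := hl
    exact nodup_cycList σ s
  · rw [List.pairwise_map]
    have hp := pairwise_starts σ
    refine List.Pairwise.imp_of_mem ?_ hp
    intro a b ha hb hab
    intro y hy1 hy2
    rw [mem_cycList] at hy1 hy2
    have := min_unique σ ((mem_starts σ a).1 ha) ((mem_starts σ b).1 hb) (hy1.trans hy2.symm)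
    exact absurd this (ne_of_lt hab)

lemma length_L : (L σ).length = n := by
  have h1 : (List.finRange n) <+~ L σ :=
    (List.nodup_finRange n).subperm (fun y _ => mem_L σ y)
  have h2 : L σ <+~ List.finRange n :=
    (nodup_L σ).subperm (fun y _ => List.mem_finRange y)
  have := h1.length_le
  have := h2.length_le
  simp only [List.length_finRange] at *
  omega

lemma main_fwd {x y : Fin n} (h : [x, y] <:+: L σ) :
    (y = σ x ∧ ¬ isMinP σ y) ∨ (isMinP σ y ∧ isMinP σ (σ x) ∧ σ x < y) := by
  rw [L] at h
  rcases (pair_infix_flatMap (fun s _ => cycList_ne_nil σ s)).1 h with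
    ⟨s, hs, h'⟩ | ⟨s, t, hst, h1, h2⟩
  · left
    obtain ⟨hyx, hys⟩ := infix_step σ h'
    refine ⟨hyx, ?_⟩
    intro hmin
    have hy : y ∈ cycList σ s := h'.sublist.subset (by simp)
    rw [mem_cycList] at hy
    exact hys ((min_unique σ ((mem_starts σ s).1 hs) hmin hy).symm)
  · right
    have hsS : s ∈ starts σ := hst.sublist.subset (by simp)
    have htS : t ∈ starts σ := hst.sublist.subset (by simp)
    have hlt : s < t := by
      have hp := (pairwise_starts σ).sublist hst.sublist
      rcases hp with - | ⟨hp, -⟩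
      exact hp t (by simp)
    rw [cycList_getLast? σ s] at h1
    injection h1 with h1
    have hsx : σ x = s := by rw [← h1, sigma_iterate_pred]
    rw [cycList_head? σ t] at h2
    injection h2 with h2
    subst h2
    exact ⟨(mem_starts σ t).1 htS, hsx ▸ (mem_starts σ s).1 hsS, hsx ▸ hlt⟩

lemma main_bwd1 {x y : Fin n} (h : y = σ x) (hy : ¬ isMinP σ y) : [x, y] <:+: L σ := by
  obtain ⟨m, hsc, hmin⟩ := exists_min σ x
  have hx : x ∈ cycList σ m := (mem_cycList σ m x).2 hsc.symm
  have hym : y ≠ m := by rintro rfl; exact hy hmin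
  have hinf : [x, y] <:+: cycList σ m := infix_step' σ hx h hym
  rw [L]
  exact (pair_infix_flatMap (fun s _ => cycList_ne_nil σ s)).2
    (Or.inl ⟨m, (mem_starts σ m).2 hmin, hinf⟩)

lemma next_in_sorted {α : Type*} [LinearOrder α] {S : List α} {m z : α}
    (hp : List.Pairwise (· < ·) S) (hm : m ∈ S) (hz : z ∈ S) (hlt : m < z) :
    ∃ t, [m, t] <:+: S ∧ m < t ∧ t ≤ z := by
  obtain ⟨s1, s2, rfl⟩ := List.append_of_mem hm
  rw [List.pairwise_append] at hp
  obtain ⟨-, hp2, hp12⟩ := hp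
  rw [List.pairwise_cons] at hp2
  obtain ⟨hm2, hp2'⟩ := hp2
  have hz2 : z ∈ s2 := by
    rcases List.mem_append.1 hz with h | h
    · exact absurd (hp12 z h m List.mem_cons_self) (asymm hlt)
    · rcases List.mem_cons.1 h with rfl | h
      · exact absurd hlt (lt_irrefl z)
      · exact h
  cases s2 with
  | nil => simp at hz2
  | cons t s2' =>
    refine ⟨t, ⟨s1, s2', by simp⟩, hm2 t List.mem_cons_self, ?_⟩
    rcases List.mem_cons.1 hz2 with rfl | hz2'
    · exact le_refl _
    · rw [List.pairwise_cons] at hp2'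
      exact le_of_lt (hp2'.1 z hz2')

lemma main_bwd2 {x z : Fin n} (hm : isMinP σ (σ x)) (hz : isMinP σ z) (hlt : σ x < z) :
    ∃ y, isMinP σ y ∧ σ x < y ∧ y ≤ z ∧ [x, y] <:+: L σ := by
  have hmS : σ x ∈ starts σ := (mem_starts σ _).2 hm
  have hzS : z ∈ starts σ := (mem_starts σ _).2 hz
  obtain ⟨t, hinf, hmt, htz⟩ := next_in_sorted (pairwise_starts σ) hmS hzS hlt
  have htS : t ∈ starts σ := hinf.sublist.subset (by simp)
  refine ⟨t, (mem_starts σ t).1 htS, hmt, htz, ?_⟩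
  rw [L]
  refine (pair_infix_flatMap (fun s _ => cycList_ne_nil σ s)).2 (Or.inr ⟨σ x, t, hinf, ?_, cycList_head? σ t⟩)
  rw [cycList_getLast? σ (σ x)]
  congr 1
  apply σ.injective
  rw [sigma_iterate_pred]


lemma sameCycle_exists_nat_iterate {σ : Equiv.Perm (Fin n)} {x y : Fin n}
    (h : σ.SameCycle x y) : ∃ k : ℕ, (⇑σ)^[k] x = y := by
  obtain ⟨k, -, -, hk⟩ := h.exists_pow_eq σ
  exact ⟨k, by rw [Equiv.Perm.iterate_eq_pow]; exact hk⟩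

lemma sameCycle_of_iterate (σ : Equiv.Perm (Fin n)) (x : Fin n) (k : ℕ) :
    σ.SameCycle x ((⇑σ)^[k] x) :=
  ⟨(k : ℤ), by rw [zpow_natCast, ← Equiv.Perm.iterate_eq_pow]⟩

lemma not_sameCycle_fixed {τ : Equiv.Perm (Fin n)} {I y : Fin n} (hτI : τ I = I)
    (hy : y ≠ I) : ¬ τ.SameCycle y I := by
  rintro ⟨k, hk⟩
  have h2 : (τ ^ k) I = I := Equiv.Perm.zpow_apply_eq_self_of_apply_eq_self hτI k
  exact hy (Equiv.injective (τ ^ k) (hk.trans h2.symm))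

section transfer

variable {σ : Equiv.Perm (Fin n)} {x₀ I : Fin n}

lemma tau_apply_of_ne (hx : σ x₀ = I) {w : Fin n} (hw1 : w ≠ I) (hw2 : w ≠ x₀) :
    (σ * Equiv.swap I x₀) w = σ w := by
  simp [Equiv.Perm.mul_apply, Equiv.swap_apply_of_ne_of_ne hw1 hw2]

lemma tau_apply_x0 (hx : σ x₀ = I) : (σ * Equiv.swap I x₀) x₀ = σ I := by
  simp [Equiv.Perm.mul_apply, Equiv.swap_apply_right]

lemma tau_apply_I (hx : σ x₀ = I) : (σ * Equiv.swap I x₀) I = I := by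
  simp [Equiv.Perm.mul_apply, Equiv.swap_apply_left, hx]

lemma sameCycle_transfer (hx : σ x₀ = I) (hne : x₀ ≠ I)
    {y z : Fin n} (hy : y ≠ I) (hz : z ≠ I) :
    (σ * Equiv.swap I x₀).SameCycle y z ↔ σ.SameCycle y z := by
  set τ := σ * Equiv.swap I x₀ with hτ
  have hτI : τ I = I := tau_apply_I hx
  have hτne : ∀ w, w ≠ I → τ w ≠ I := fun w hw hc =>
    hw (Equiv.injective τ (hc.trans hτI.symm))
  have step1 : ∀ w, w ≠ I → σ.SameCycle w (τ w) := by
    intro w hw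
    by_cases hwx : w = x₀
    · rw [hwx, hτ, tau_apply_x0 hx]
      have h2 : (⇑σ)^[2] x₀ = σ I := by
        rw [show (2:ℕ) = 1+1 from rfl, Function.iterate_add_apply]
        simp [hx]
      exact h2 ▸ sameCycle_of_iterate σ x₀ 2
    · rw [hτ, tau_apply_of_ne hx hw hwx]
      simpa using sameCycle_of_iterate σ w 1
  have claim1 : ∀ k : ℕ, ∀ w, w ≠ I → σ.SameCycle w ((⇑τ)^[k] w) := by
    intro k
    induction k with
    | zero => intro w _; exact Equiv.Perm.SameCycle.refl σ w
    | succ k ih =>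
      intro w hw
      rw [Function.iterate_succ_apply]
      exact (step1 w hw).trans (ih (τ w) (hτne w hw))
  have claim2 : ∀ k : ℕ, ∀ w, w ≠ I → (⇑σ)^[k] w ≠ I → τ.SameCycle w ((⇑σ)^[k] w) := by
    intro k
    induction k using Nat.strong_induction_on with
    | _ k ih =>
      match k with
      | 0 => intro w _ _; exact Equiv.Perm.SameCycle.refl τ w
      | Nat.succ k =>
        intro w hw hk1
        by_cases hsy : σ w = I
        · have hwx : w = x₀ := Equiv.injective σ (hsy.trans hx.symm)
          match k with
          | 0 =>
            exfalso; apply hk1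
            simpa using hsy
          | Nat.succ k' =>
            have hτw : τ w = (⇑σ)^[2] w := by
              rw [hwx, hτ, tau_apply_x0 hx]
              rw [show (2:ℕ) = 1+1 from rfl, Function.iterate_add_apply]
              simp [hx]
            have hrw : (⇑σ)^[k' + 1 + 1] w = (⇑σ)^[k'] (τ w) := by
              rw [hτw, ← Function.iterate_add_apply]
            have s1 : τ.SameCycle w (τ w) := by
              simpa using sameCycle_of_iterate τ w 1
            rw [hrw] at hk1 ⊢
            exact s1.trans (ih k' (by omega) (τ w) (hτne w hw) hk1)
        · have hwx : w ≠ x₀ := fun h => hsy (h ▸ hx)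
          have hτw : τ w = σ w := by rw [hτ, tau_apply_of_ne hx hw hwx]
          have s1 : τ.SameCycle w (σ w) := by
            rw [← hτw]; simpa using sameCycle_of_iterate τ w 1
          rw [Function.iterate_succ_apply] at hk1 ⊢
          exact s1.trans (ih k (by omega) (σ w) hsy hk1)
  constructor
  · intro h
    obtain ⟨k, hk⟩ := sameCycle_exists_nat_iterate h
    exact hk ▸ claim1 k y hy
  · intro h
    obtain ⟨k, hk⟩ := sameCycle_exists_nat_iterate h
    subst hk
    exact claim2 k y hy hz

lemma isMinP_transfer (hx : σ x₀ = I) (hne : x₀ ≠ I)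
    {y : Fin n} (hy : y ≠ I) (hyI : y ≤ I) :
    isMinP (σ * Equiv.swap I x₀) y ↔ isMinP σ y := by
  have hτI : (σ * Equiv.swap I x₀) I = I := tau_apply_I hx
  constructor
  · intro h z hz
    by_cases hzI : z = I
    · exact hzI ▸ hyI
    · exact h z ((sameCycle_transfer hx hne hy hzI).2 hz)
  · intro h z hz
    by_cases hzI : z = I
    · exact absurd (hzI ▸ hz) (not_sameCycle_fixed hτI hy)
    · exact h z ((sameCycle_transfer hx hne hy hzI).1 hz)

end transfer

section count
open Finset

lemma card_fiber_eq (a b b' : Fin n) :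
    (univ.filter (fun σ : Equiv.Perm (Fin n) => σ a = b)).card
      = (univ.filter (fun σ : Equiv.Perm (Fin n) => σ a = b')).card := by
  classical
  apply Finset.card_nbij (fun σ => (Equiv.swap b b') * σ)
  · intro σ hσ
    simp only [Finset.mem_coe, Finset.mem_filter, Finset.mem_univ, true_and] at hσ ⊢
    rw [Equiv.Perm.mul_apply, hσ, Equiv.swap_apply_left]
  · intro σ1 _ σ2 _ h
    exact mul_left_cancel h
  · intro τ hτ
    simp only [Finset.mem_coe, Finset.mem_filter, Finset.mem_univ, true_and] at hτ
    refine ⟨(Equiv.swap b b') * τ, ?_, by simp [← mul_assoc, Equiv.swap_mul_self]⟩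
    simp only [Finset.mem_coe, Finset.mem_filter, Finset.mem_univ, true_and]
    rw [Equiv.Perm.mul_apply, hτ, Equiv.swap_apply_right]

lemma card_fiber (hn : 0 < n) (a b : Fin n) :
    (univ.filter (fun σ : Equiv.Perm (Fin n) => σ a = b)).card = (n - 1).factorial := by
  classical
  have hsum : (univ : Finset (Equiv.Perm (Fin n))).card
      = ∑ c : Fin n, (univ.filter (fun σ : Equiv.Perm (Fin n) => σ a = c)).card :=
    Finset.card_eq_sum_card_fiberwise (f := fun σ : Equiv.Perm (Fin n) => σ a) (fun σ _ => mem_univ _)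
  have hconst : ∀ c : Fin n, (univ.filter (fun σ : Equiv.Perm (Fin n) => σ a = c)).card
      = (univ.filter (fun σ : Equiv.Perm (Fin n) => σ a = b)).card :=
    fun c => card_fiber_eq a c b
  rw [Finset.sum_congr rfl (fun c _ => hconst c), Finset.sum_const, smul_eq_mul] at hsum
  rw [Finset.card_univ, Finset.card_univ, Fintype.card_fin, Fintype.card_perm,
    Fintype.card_fin] at hsum
  rw [← Nat.mul_factorial_pred (Nat.pos_iff_ne_zero.1 hn)] at hsum
  exact (Nat.eq_of_mul_eq_mul_left hn hsum).symm

lemma card_lt_fiber (I : Fin n) :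
    (univ.filter (fun σ : Equiv.Perm (Fin n) => σ I < I)).card
      = I.val * (n - 1).factorial := by
  classical
  have hn : 0 < n := I.pos
  rw [Finset.card_eq_sum_card_fiberwise (f := fun σ => σ I) (t := Finset.Iio I)
    (fun σ hσ => by simpa using (mem_filter.1 hσ).2)]
  have heach : ∀ b ∈ Finset.Iio I,
      (Finset.filter (fun σ : Equiv.Perm (Fin n) => σ I = b)
        (univ.filter (fun σ => σ I < I))).card = (n - 1).factorial := by
    intro b hb
    rw [Finset.filter_filter]
    have : Finset.filter (fun σ : Equiv.Perm (Fin n) => σ I < I ∧ σ I = b) univ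
        = Finset.filter (fun σ : Equiv.Perm (Fin n) => σ I = b) univ := by
      apply Finset.filter_congr
      intro σ _
      constructor
      · exact fun h => h.2
      · exact fun h => ⟨h ▸ Finset.mem_Iio.1 hb, h⟩
    rw [this, card_fiber hn]
  rw [Finset.sum_congr rfl heach, Finset.sum_const, Fin.card_Iio, smul_eq_mul]

lemma exists_min' (τ : Equiv.Perm (Fin n)) (x : Fin n) :
    ∃ m, τ.SameCycle x m ∧ isMinP τ m := by
  classical
  have hne : (Finset.univ.filter (fun y => τ.SameCycle x y)).Nonempty :=
    ⟨x, by simp [Equiv.Perm.SameCycle.refl]⟩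
  have hmem := Finset.min'_mem _ hne
  rw [Finset.mem_filter] at hmem
  refine ⟨_, hmem.2, fun y hy => Finset.min'_le _ _ ?_⟩
  rw [Finset.mem_filter]
  exact ⟨Finset.mem_univ _, hmem.2.trans hy⟩

lemma D_greatest {σ : Equiv.Perm (Fin n)} {I : Fin n}
    (hlt : σ I < I) (hmin : isMinP σ (σ I))
    (hno : ∀ y, isMinP σ y → ¬(σ I < y ∧ y < I)) :
    isMinP (σ * Equiv.swap I (σ⁻¹ I)) (σ I) ∧
      ∀ y, y < I → isMinP (σ * Equiv.swap I (σ⁻¹ I)) y → y ≤ σ I := by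
  have hx : σ (σ⁻¹ I) = I := by rw [← Equiv.Perm.mul_apply, mul_inv_cancel, Equiv.Perm.one_apply]
  have hne : σ⁻¹ I ≠ I := by
    intro h
    have h2 := congrArg σ h
    rw [hx] at h2
    rw [← h2] at hlt
    exact lt_irrefl I hlt
  constructor
  · exact (isMinP_transfer hx hne (ne_of_lt hlt) (le_of_lt hlt)).2 hmin
  · intro y hy hmy
    have h1 : isMinP σ y := (isMinP_transfer hx hne (ne_of_lt hy) (le_of_lt hy)).1 hmy
    by_contra hc
    push_neg at hc
    exact hno y h1 ⟨hc, hy⟩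

lemma card_D (I : Fin n) (hI0 : 0 < I.val) :
    (univ.filter (fun σ : Equiv.Perm (Fin n) =>
        σ I < I ∧ isMinP σ (σ I) ∧ ∀ y, isMinP σ y → ¬(σ I < y ∧ y < I))).card
      = (n - 1).factorial := by
  classical
  have hn : 0 < n := I.pos
  rw [← card_fiber hn I I]
  -- the sorries: bijection
  apply Finset.card_nbij (fun σ => σ * Equiv.swap I (σ⁻¹ I))
  · intro σ hσ
    simp only [Finset.mem_coe, Finset.mem_filter, Finset.mem_univ, true_and] at hσ ⊢
    rw [Equiv.Perm.mul_apply, Equiv.swap_apply_left, ← Equiv.Perm.mul_apply, mul_inv_cancel, Equiv.Perm.one_apply]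
  · intro σ1 h1 σ2 h2 heq
    simp only [Finset.mem_coe, Finset.mem_filter, Finset.mem_univ, true_and] at h1 h2
    obtain ⟨hlt1, hmin1, hno1⟩ := h1
    obtain ⟨hlt2, hmin2, hno2⟩ := h2
    have heq' : σ1 * Equiv.swap I (σ1⁻¹ I) = σ2 * Equiv.swap I (σ2⁻¹ I) := heq
    obtain ⟨ha1, hb1⟩ := D_greatest hlt1 hmin1 hno1
    obtain ⟨ha2, hb2⟩ := D_greatest hlt2 hmin2 hno2
    rw [heq'] at ha1 hb1
    have hIeq : σ1 I = σ2 I :=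
      le_antisymm (hb2 (σ1 I) hlt1 ha1) (hb1 (σ2 I) hlt2 ha2)
    have hx1 : (σ1 * Equiv.swap I (σ1⁻¹ I)) (σ1⁻¹ I) = σ1 I := by
      rw [Equiv.Perm.mul_apply, Equiv.swap_apply_right]
    have hx2 : (σ2 * Equiv.swap I (σ2⁻¹ I)) (σ2⁻¹ I) = σ2 I := by
      rw [Equiv.Perm.mul_apply, Equiv.swap_apply_right]
    rw [heq'] at hx1
    have hx0 : σ1⁻¹ I = σ2⁻¹ I := by
      apply Equiv.injective (σ2 * Equiv.swap I (σ2⁻¹ I))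
      rw [hx1, hx2, hIeq]
    calc σ1 = σ1 * Equiv.swap I (σ1⁻¹ I) * Equiv.swap I (σ1⁻¹ I) := by
              rw [mul_assoc, Equiv.swap_mul_self, mul_one]
      _ = σ2 * Equiv.swap I (σ2⁻¹ I) * Equiv.swap I (σ2⁻¹ I) := by rw [heq', hx0]
      _ = σ2 := by rw [mul_assoc, Equiv.swap_mul_self, mul_one]
  · intro τ hτ
    simp only [Finset.mem_coe, Finset.mem_filter, Finset.mem_univ, true_and] at hτ
    obtain ⟨m₀, hsc, hm₀⟩ := exists_min' τ ⟨0, hn⟩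
    have hm₀0 : m₀ ≤ ⟨0, hn⟩ := hm₀ _ hsc.symm
    have hm₀I : m₀ < I := by
      rw [Fin.lt_def]
      rw [Fin.le_def] at hm₀0
      simp only [] at hm₀0
      omega
    have hMne : ((Finset.univ.filter (fun y => y < I ∧ isMinP τ y)) : Finset (Fin n)).Nonempty :=
      ⟨m₀, by simp only [Finset.mem_filter, Finset.mem_univ, true_and]; exact ⟨hm₀I, hm₀⟩⟩
    set M := Finset.univ.filter (fun y => y < I ∧ isMinP τ y) with hM
    set ms := M.max' hMne with hms
    obtain ⟨-, hmsI, hmsmin⟩ := Finset.mem_filter.1 (M.max'_mem hMne)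
    set x₀ := τ⁻¹ ms with hx₀
    have hτx₀ : τ x₀ = ms := by rw [hx₀, ← Equiv.Perm.mul_apply, mul_inv_cancel, Equiv.Perm.one_apply]
    have hx₀I : x₀ ≠ I := by
      intro h
      rw [h, hτ] at hτx₀
      have h6 : ms < I := hmsI
      rw [← hτx₀] at h6
      exact lt_irrefl I h6
    set σ := τ * Equiv.swap I x₀ with hσ
    have hσx₀ : σ x₀ = I := by
      rw [hσ, Equiv.Perm.mul_apply, Equiv.swap_apply_right, hτ]
    have hσI : σ I = ms := by
      rw [hσ, Equiv.Perm.mul_apply, Equiv.swap_apply_left, hτx₀]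
    have hσinv : σ⁻¹ I = x₀ := by
      apply Equiv.injective σ
      rw [← Equiv.Perm.mul_apply, mul_inv_cancel, Equiv.Perm.one_apply, hσx₀]
    have hστ : σ * Equiv.swap I x₀ = τ := by
      rw [hσ, mul_assoc, Equiv.swap_mul_self, mul_one]
    have htrans : ∀ y, y ≠ I → y ≤ I → (isMinP τ y ↔ isMinP σ y) := by
      intro y h1 h2
      have h3 := isMinP_transfer (σ := σ) hσx₀ hx₀I h1 h2
      rwa [hστ] at h3
    refine ⟨σ, ?_, ?_⟩
    · simp only [Finset.mem_coe, Finset.mem_filter, Finset.mem_univ, true_and]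
      have h7 : σ I < I := by
        have h6 : ms < I := hmsI
        rw [← hσI] at h6
        exact h6
      refine ⟨h7, ?_, ?_⟩
      · rw [hσI]
        exact (htrans ms (ne_of_lt hmsI) (le_of_lt hmsI)).1 hmsmin
      · intro y hy hc
        obtain ⟨h1, h2⟩ := hc
        rw [hσI] at h1
        have h3 : isMinP τ y := (htrans y (ne_of_lt h2) (le_of_lt h2)).2 hy
        have h4 : y ∈ M := Finset.mem_filter.2 ⟨Finset.mem_univ _, h2, h3⟩
        have h5 : y ≤ ms := Finset.le_max' M y h4
        exact absurd h1 (not_lt.2 h5)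
    · show σ * Equiv.swap I (σ⁻¹ I) = τ
      rw [hσinv, hστ]

end count


section final
open Equiv Function List

variable {n i : ℕ}

lemma getD_flatten_eq (σ : Equiv.Perm (Fin n)) {a : ℕ} {x : Fin n}
    (hx : (L σ)[a]? = some x) :
    (flattenPerm σ).getD a 0 = x.val + 1 := by
  have haux : ∀ l : List (Fin n),
      List.map (fun x : ℕ => x + 1) (do let a ← l; pure ((a : ℕ)) : List ℕ)
        = l.map (fun x : Fin n => x.val + 1) := by
    intro l
    induction l with
    | nil => rfl
    | cons a l ih => simpa using ih
  have h : flattenPerm σ = (L σ).map (fun x : Fin n => x.val + 1) := haux (L σ)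
  rw [h, List.getD_eq_getElem?_getD, List.getElem?_map, hx]
  rfl

lemma P_iff_C (hi : 3 ≤ i) (hin : i + 1 ≤ n) (σ : Equiv.Perm (Fin n)) :
    (∃ a < n - 1, (flattenPerm σ).getD a 0 = i ∧ (flattenPerm σ).getD (a + 1) 0 < i) ↔
      (σ ⟨i-1, by omega⟩ < (⟨i-1, by omega⟩ : Fin n) ∧
        (¬ isMinP σ (σ ⟨i-1, by omega⟩) ∨
          ∃ y, isMinP σ y ∧ σ ⟨i-1, by omega⟩ < y ∧ y < (⟨i-1, by omega⟩ : Fin n))) := by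
  set I : Fin n := ⟨i-1, by omega⟩ with hIdef
  constructor
  · rintro ⟨a, ha, h1, h2⟩
    have h0 : a < (L σ).length := by rw [length_L]; omega
    have h0' : a + 1 < (L σ).length := by rw [length_L]; omega
    have e0 : (L σ)[a]? = some ((L σ)[a]'h0) := List.getElem?_eq_getElem h0
    have e0' : (L σ)[a+1]? = some ((L σ)[a+1]'h0') := List.getElem?_eq_getElem h0'
    rw [getD_flatten_eq σ e0] at h1
    rw [getD_flatten_eq σ e0'] at h2
    have hxa : (L σ)[a]'h0 = I := by
      apply Fin.ext
      show ((L σ)[a]'h0).val = i - 1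
      omega
    set y : Fin n := (L σ)[a+1]'h0' with hydef
    have hyI : y < I := by
      rw [Fin.lt_def]
      show y.val < i - 1
      omega
    have hinf : [I, y] <:+: L σ := by
      rw [pair_infix_iff_getElem]
      exact ⟨a, h0', hxa, rfl⟩
    rcases main_fwd σ hinf with ⟨hy, hnm⟩ | ⟨hminy, hminsx, hlt2⟩
    · rw [hy] at hyI hnm
      exact ⟨hyI, Or.inl hnm⟩
    · exact ⟨lt_trans hlt2 hyI, Or.inr ⟨y, hminy, hlt2, hyI⟩⟩
  · rintro ⟨hlt, hC⟩
    have key : ∃ y : Fin n, y < I ∧ [I, y] <:+: L σ := by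
      by_cases hm : isMinP σ (σ I)
      · rcases hC with hC | ⟨z, hz, h1, h2⟩
        · exact absurd hm hC
        · obtain ⟨y, _, _, hy3, hy4⟩ := main_bwd2 σ hm hz h1
          exact ⟨y, lt_of_le_of_lt hy3 h2, hy4⟩
      · exact ⟨σ I, hlt, main_bwd1 σ rfl hm⟩
    obtain ⟨y, hyI, hinf⟩ := key
    obtain ⟨k, hk, e1, e2⟩ := pair_infix_iff_getElem.1 hinf
    have hk' : k + 1 < n := by rw [← length_L σ]; exact hk
    have q1 : (L σ)[k]? = some I := by
      rw [List.getElem?_eq_getElem (by omega : k < (L σ).length)]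
      exact congrArg some e1
    have q2 : (L σ)[k+1]? = some y := by
      rw [List.getElem?_eq_getElem hk]
      exact congrArg some e2
    refine ⟨k, by omega, ?_, ?_⟩
    · rw [getD_flatten_eq σ q1]
      show (i - 1) + 1 = i
      omega
    · rw [getD_flatten_eq σ q2]
      have : y.val < i - 1 := hyI
      omega

end final
end Flat

theorem card_i_directly_precedes_smaller (n i : ℕ) (hi : 3 ≤ i) (hin : i ≤ n - 1) :
    (Finset.univ.filter (fun σ : Equiv.Perm (Fin n) =>
      ∃ a < n - 1, (flattenPerm σ).getD a 0 = i ∧ (flattenPerm σ).getD (a + 1) 0 < i)).card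
      = (i - 2) * Nat.factorial (n - 1) := by
  classical
  have hin' : i + 1 ≤ n := by omega
  set I : Fin n := ⟨i - 1, by omega⟩ with hIdef
  have h1 : Finset.univ.filter (fun σ : Equiv.Perm (Fin n) =>
      ∃ a < n - 1, (flattenPerm σ).getD a 0 = i ∧ (flattenPerm σ).getD (a + 1) 0 < i)
      = Finset.univ.filter (fun σ : Equiv.Perm (Fin n) =>
        σ I < I ∧ ¬(Flat.isMinP σ (σ I) ∧
          ∀ y, Flat.isMinP σ y → ¬(σ I < y ∧ y < I))) := by
    apply Finset.filter_congr
    intro σ _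
    rw [Flat.P_iff_C hi hin' σ]
    constructor
    · rintro ⟨ha, hb⟩
      refine ⟨ha, ?_⟩
      rintro ⟨hc, hd⟩
      rcases hb with hb | ⟨y, hy1, hy2, hy3⟩
      · exact hb hc
      · exact hd y hy1 ⟨hy2, hy3⟩
    · rintro ⟨ha, hb⟩
      refine ⟨ha, ?_⟩
      by_cases hc : Flat.isMinP σ (σ I)
      · right
        by_contra hd
        push_neg at hd
        exact hb ⟨hc, fun y hy hz => absurd (hd y hy hz.1) (not_le.2 hz.2)⟩
      · exact Or.inl hc
  rw [h1]
  have hsplit := Finset.card_filter_add_card_filter_not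
    (s := Finset.univ.filter (fun σ : Equiv.Perm (Fin n) => σ I < I))
    (p := fun σ => Flat.isMinP σ (σ I) ∧ ∀ y, Flat.isMinP σ y → ¬(σ I < y ∧ y < I))
  rw [Finset.filter_filter, Finset.filter_filter] at hsplit
  have hD : (Finset.univ.filter (fun σ : Equiv.Perm (Fin n) =>
      σ I < I ∧ Flat.isMinP σ (σ I) ∧
        ∀ y, Flat.isMinP σ y → ¬(σ I < y ∧ y < I))).card = (n - 1).factorial :=
    Flat.card_D I (by show 0 < i - 1; omega)
  have hLT : (Finset.univ.filter (fun σ : Equiv.Perm (Fin n) => σ I < I)).card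
      = (i - 1) * (n - 1).factorial := by
    rw [Flat.card_lt_fiber I]
  rw [hD, hLT] at hsplit
  have h9 : (i - 1) * (n-1).factorial = (i - 2) * (n-1).factorial + (n-1).factorial := by
    have h8 : i - 1 = (i - 2) + 1 := by omega
    rw [h8, add_mul, one_mul]
  omega
end
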